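/- For every k ≥ 1, the treewidth of the (k × k)-grid graph is at least k − 1 (in fact exactly k for k ≥ 2). -/

import Mathlib

/-- `(T, X)` is a tree-decomposition of the graph `H`. -/
def IsTreeDecomp {V ι : Type*} (H : SimpleGraph V) (T : SimpleGraph ι)
    (X : ι → Set V) : Prop :=
  T.IsTree ∧ (∀ v, ∃ i, v ∈ X i) ∧
  (∀ u v, H.Adj u v → ∃ i, u ∈ X i ∧ v ∈ X i) ∧
  ∀ v : V, (T.induce {i | v ∈ X i}).Connected

/-- The treewidth of a (finite) graph `G`: the least `w` admitting a
tree-decomposition with all bags of size at most `w + 1`. -/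
noncomputable def treewidth {V : Type*} (G : SimpleGraph V) : ℕ :=
  sInf {w | ∃ (m : ℕ) (T : SimpleGraph (Fin m)) (X : Fin m → Set V),
    IsTreeDecomp G T X ∧ ∀ i, (X i).ncard ≤ w + 1}

/-- The `(k × k)`-grid graph on `{1,…,k} × {1,…,k}` (modelled by `Fin k × Fin k`):
vertices at Euclidean distance 1 are adjacent. -/
def gridGraph (k : ℕ) : SimpleGraph (Fin k × Fin k) where
  Adj u v := (u.1 = v.1 ∧ |(u.2.val : ℤ) - (v.2.val : ℤ)| = 1) ∨
             (u.2 = v.2 ∧ |(u.1.val : ℤ) - (v.1.val : ℤ)| = 1)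
  symm := by
    constructor
    rintro u v (⟨h1, h2⟩ | ⟨h1, h2⟩)
    · exact Or.inl ⟨h1.symm, by rwa [abs_sub_comm]⟩
    · exact Or.inr ⟨h1.symm, by rwa [abs_sub_comm]⟩
  loopless := ⟨by rintro u (⟨-, h⟩ | ⟨-, h⟩) <;> simp at h⟩

open SimpleGraph

namespace TWAux

lemma walk_ind {α : Type*} {G : SimpleGraph α} (P : α → Prop)
    (hP : ∀ a b, G.Adj a b → P a → P b) {u v : α} (p : G.Walk u v) (hu : P u) : P v := by
  induction p with
  | nil => exact hu
  | cons h q ih => exact ih (hP _ _ h hu)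

/-- Reachability in an induced subgraph along a chain. -/
lemma reach_chain {α : Type*} {G : SimpleGraph α} {C : Set α} (f : ℕ → α) :
    ∀ (a b : ℕ) (_ : a ≤ b) (hmem : ∀ n, a ≤ n → n ≤ b → f n ∈ C)
      (hadj : ∀ n, a ≤ n → n < b → G.Adj (f n) (f (n+1))),
      (G.induce C).Reachable ⟨f a, hmem a le_rfl ‹a ≤ b›⟩ ⟨f b, hmem b ‹a ≤ b› le_rfl⟩ := by
  intro a b hab
  induction b, hab using Nat.le_induction with
  | base => intro hmem _; rfl
  | succ n hn ih =>
    intro hmem hadj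
    have h1 : (G.induce C).Reachable ⟨f a, hmem a le_rfl (by omega)⟩
        ⟨f n, hmem n hn (by omega)⟩ :=
      ih (fun m hm hm' => hmem m hm (by omega)) (fun m hm hm' => hadj m hm (by omega))
    refine h1.trans (SimpleGraph.Adj.reachable ?_)
    exact (SimpleGraph.comap_adj).2 (hadj n hn (by omega))

lemma connected_of_hub {α : Type*} {G : SimpleGraph α} {C : Set α} (hub : α) (hhub : hub ∈ C)
    (h : ∀ x (hx : x ∈ C), (G.induce C).Reachable ⟨x, hx⟩ ⟨hub, hhub⟩) :
    (G.induce C).Connected := by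
  have : Nonempty C := ⟨⟨hub, hhub⟩⟩
  refine SimpleGraph.Connected.mk ?_
  rintro ⟨x, hx⟩ ⟨y, hy⟩
  exact (h x hx).trans (h y hy).symm


variable {m : ℕ} {T : SimpleGraph (Fin m)}

/-- nodes on the `s`-side after removing edge `st`. -/
def side (T : SimpleGraph (Fin m)) (s t : Fin m) : Set (Fin m) :=
  {i | (T.deleteEdges {s(s,t)}).Reachable s i}

lemma side_self (s t : Fin m) : s ∈ side T s t := SimpleGraph.Reachable.refl s

lemma side_adj {s t i j : Fin m} (h : T.Adj i j) (hij : s(i,j) ≠ s(s,t))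
    (hi : i ∈ side T s t) : j ∈ side T s t :=
  hi.trans (SimpleGraph.Adj.reachable (by simp [h, hij]))

lemma deleteEdges_swap (s t : Fin m) :
    T.deleteEdges {s(s,t)} = T.deleteEdges {s(t,s)} := by
  rw [Sym2.eq_swap]

lemma not_mem_side (ht : T.IsTree) {s t : Fin m} (hadj : T.Adj s t) : t ∉ side T s t := by
  have hb : T.IsBridge s(s, t) :=
    (isAcyclic_iff_forall_adj_isBridge.1 ht.IsAcyclic) hadj
  rw [isBridge_iff] at hb
  exact hb

lemma side_disjoint (ht : T.IsTree) {s t i : Fin m} (hadj : T.Adj s t)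
    (h1 : i ∈ side T s t) (h2 : i ∈ side T t s) : False := by
  have hb : T.IsBridge s(s, t) :=
    (isAcyclic_iff_forall_adj_isBridge.1 ht.IsAcyclic) hadj
  rw [isBridge_iff] at hb
  have h2' : (T.deleteEdges {s(s,t)}).Reachable t i := by
    rw [deleteEdges_swap s t]; exact h2
  exact hb (h1.trans h2'.symm)

lemma side_total (ht : T.IsTree) {s t : Fin m} (hadj : T.Adj s t) (i : Fin m) :
    i ∈ side T s t ∨ i ∈ side T t s := by
  obtain ⟨p⟩ := ht.isConnected.preconnected s i
  refine walk_ind (fun j => j ∈ side T s t ∨ j ∈ side T t s) ?_ p (Or.inl (side_self s t))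
  intro a b hab hA
  by_cases he : s(a, b) = s(s, t)
  · rw [Sym2.eq_iff] at he
    rcases he with ⟨rfl, rfl⟩ | ⟨rfl, rfl⟩
    · exact Or.inr (side_self b a)
    · exact Or.inl (side_self b a)
  · rcases hA with h | h
    · exact Or.inl (side_adj hab he h)
    · exact Or.inr (side_adj hab (fun hh => he (hh.trans Sym2.eq_swap)) h)

lemma not_side_iff (ht : T.IsTree) {s t : Fin m} (hadj : T.Adj s t) (i : Fin m) :
    i ∉ side T s t ↔ i ∈ side T t s := by
  constructor
  · intro h; rcases side_total ht hadj i with h' | h'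
    · exact absurd h' h
    · exact h'
  · intro h h'; exact side_disjoint ht hadj h' h

/-- A walk crossing from the `s`-side to outside it passes through `s` and `t`. -/
lemma crossing (ht : T.IsTree) {s t : Fin m} (hadj : T.Adj s t) {a b : Fin m}
    (p : T.Walk a b) (ha : a ∈ side T s t) (hb : b ∉ side T s t) :
    s ∈ p.support ∧ t ∈ p.support := by
  induction p with
  | nil => exact absurd ha hb
  | @cons a c b h q ih =>
    by_cases hc : c ∈ side T s t
    · obtain ⟨h1, h2⟩ := ih hc hb
      exact ⟨List.mem_cons_of_mem _ h1, List.mem_cons_of_mem _ h2⟩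
    · have he : s(a, c) = s(s, t) := by
        by_contra he
        exact hc (side_adj h he ha)
      rw [Sym2.eq_iff] at he
      rcases he with ⟨rfl, rfl⟩ | ⟨rfl, rfl⟩
      · exact ⟨List.mem_cons_self,
          List.mem_cons_of_mem _ (SimpleGraph.Walk.start_mem_support q)⟩
      · exact absurd ha (not_mem_side ht hadj)


lemma exists_branch (ht : T.IsTree) {t r : Fin m} (hrt : r ≠ t) :
    ∃ s, T.Adj t s ∧ r ∈ side T s t := by
  obtain ⟨p⟩ := ht.isConnected.preconnected r t
  revert hrt
  induction p with
  | nil => intro h; exact absurd rfl h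
  | @cons a c w h q ih =>
    intro hat
    by_cases hct : c = w
    · subst hct
      exact ⟨a, h.symm, side_self a c⟩
    · obtain ⟨s, hts, hcs⟩ := ih hct
      refine ⟨s, hts, ?_⟩
      have he : s(c, a) ≠ s(s, w) := by
        intro hh
        rw [Sym2.eq_iff] at hh
        rcases hh with ⟨rfl, rfl⟩ | ⟨rfl, rfl⟩
        · exact hat rfl
        · exact hct rfl
      exact side_adj h.symm he hcs
section TD

variable {V : Type*} {m : ℕ} {H : SimpleGraph V} {T : SimpleGraph (Fin m)} {X : Fin m → Set V}

/-- the union of the bags on the `s`-side. -/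
def Wside (T : SimpleGraph (Fin m)) (X : Fin m → Set V) (s t : Fin m) : Set V :=
  ⋃ i ∈ side T s t, X i

lemma mem_Wside {s t : Fin m} {v : V} :
    v ∈ Wside T X s t ↔ ∃ i ∈ side T s t, v ∈ X i := by
  simp [Wside]

lemma interp (htd : IsTreeDecomp H T X) {s t : Fin m} (hadj : T.Adj s t) {v : V} {a b : Fin m}
    (hva : v ∈ X a) (hvb : v ∈ X b) (ha : a ∈ side T s t) (hb : b ∉ side T s t) :
    v ∈ X s ∧ v ∈ X t := by
  obtain ⟨q⟩ := (htd.2.2.2 v).preconnected ⟨a, hva⟩ ⟨b, hvb⟩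
  obtain ⟨hs, ht'⟩ := crossing htd.1 hadj
    (q.map (SimpleGraph.Embedding.induce {i | v ∈ X i}).toHom) ha hb
  have hmem : ∀ x ∈ (q.map (SimpleGraph.Embedding.induce {i | v ∈ X i}).toHom).support,
      v ∈ X x := by
    intro x hx
    rw [SimpleGraph.Walk.support_map, List.mem_map] at hx
    obtain ⟨y, _, rfl⟩ := hx
    exact y.2
  exact ⟨hmem s hs, hmem t ht'⟩

lemma Wside_inter (htd : IsTreeDecomp H T X) {s t : Fin m} (hadj : T.Adj s t) {v : V}
    (h1 : v ∈ Wside T X s t) (h2 : v ∈ Wside T X t s) : v ∈ X s ∧ v ∈ X t := by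
  obtain ⟨a, ha, hva⟩ := mem_Wside.1 h1
  obtain ⟨b, hb, hvb⟩ := mem_Wside.1 h2
  exact interp htd hadj hva hvb ha (fun h => side_disjoint htd.1 hadj h hb)

lemma mem_Wside_total (htd : IsTreeDecomp H T X) {s t : Fin m} (hadj : T.Adj s t) (v : V) :
    v ∈ Wside T X s t ∨ v ∈ Wside T X t s := by
  obtain ⟨i, hi⟩ := htd.2.1 v
  rcases side_total htd.1 hadj i with h | h
  · exact Or.inl (mem_Wside.2 ⟨i, h, hi⟩)
  · exact Or.inr (mem_Wside.2 ⟨i, h, hi⟩)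

lemma edge_same_side (htd : IsTreeDecomp H T X) {s t : Fin m} (hadj : T.Adj s t) {u v : V}
    (huv : H.Adj u v) :
    (u ∈ Wside T X s t ∧ v ∈ Wside T X s t) ∨ (u ∈ Wside T X t s ∧ v ∈ Wside T X t s) := by
  obtain ⟨i, hu, hv⟩ := htd.2.2.1 u v huv
  rcases side_total htd.1 hadj i with h | h
  · exact Or.inl ⟨mem_Wside.2 ⟨i, h, hu⟩, mem_Wside.2 ⟨i, h, hv⟩⟩
  · exact Or.inr ⟨mem_Wside.2 ⟨i, h, hu⟩, mem_Wside.2 ⟨i, h, hv⟩⟩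

lemma connected_side_aux (htd : IsTreeDecomp H T X) {s t : Fin m} (hadj : T.Adj s t)
    {C : Set V} (hC : (H.induce C).Connected)
    (hd : ∀ x ∈ C, ¬(x ∈ X s ∧ x ∈ X t)) {c0 : V} (hc0 : c0 ∈ C)
    (h0 : c0 ∈ Wside T X s t) : C ⊆ Wside T X s t := by
  intro c hc
  obtain ⟨q⟩ := hC.preconnected ⟨c0, hc0⟩ ⟨c, hc⟩
  refine walk_ind (G := H.induce C) (fun x => (x : V) ∈ Wside T X s t) ?_ q h0
  rintro ⟨x, hx⟩ ⟨y, hy⟩ hxy hxW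
  have hxy' : H.Adj x y := hxy
  rcases edge_same_side htd hadj hxy' with ⟨_, h⟩ | ⟨h, _⟩
  · exact h
  · exact absurd (Wside_inter htd hadj hxW h) (hd x hx)

lemma connected_side (htd : IsTreeDecomp H T X) {s t : Fin m} (hadj : T.Adj s t)
    {C : Set V} (hC : (H.induce C).Connected)
    (hd : ∀ x ∈ C, ¬(x ∈ X s ∧ x ∈ X t)) :
    C ⊆ Wside T X s t ∨ C ⊆ Wside T X t s := by
  obtain ⟨⟨c0, hc0⟩⟩ := hC.nonempty
  rcases mem_Wside_total htd hadj c0 with h | h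
  · exact Or.inl (connected_side_aux htd hadj hC hd hc0 h)
  · exact Or.inr (connected_side_aux htd hadj.symm hC
      (fun x hx hh => hd x hx ⟨hh.2, hh.1⟩) hc0 h)

theorem exists_bag_covering (htd : IsTreeDecomp H T X) (𝓑 : Set (Set V))
    (hBconn : ∀ B ∈ 𝓑, (H.induce B).Connected)
    (htouch : ∀ B ∈ 𝓑, ∀ B' ∈ 𝓑, (B ∩ B').Nonempty ∨ ∃ u ∈ B, ∃ v ∈ B', H.Adj u v) :
    ∃ i, ∀ B ∈ 𝓑, (B ∩ X i).Nonempty := by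
  classical
  by_contra hno
  push_neg at hno
  choose f hfB hfd using hno
  have hfd' : ∀ i, ∀ x ∈ f i, x ∉ X i := fun i x hx hx' =>
    (Set.eq_empty_iff_forall_notMem.mp (hfd i)) x ⟨hx, hx'⟩
  have ht := htd.1
  set arrow : Fin m → Fin m → Prop := fun s t => ∃ B ∈ 𝓑,
    (∀ x ∈ B, ¬(x ∈ X s ∧ x ∈ X t)) ∧ B ⊆ Wside T X t s with harrow
  have htotal : ∀ s t : Fin m, T.Adj s t → arrow s t ∨ arrow t s := by
    intro s t hadj
    have hd : ∀ x ∈ f s, ¬(x ∈ X s ∧ x ∈ X t) := fun x hx hh => hfd' s x hx hh.1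
    rcases connected_side htd hadj (hBconn _ (hfB s)) hd with h | h
    · exact Or.inr ⟨f s, hfB s, fun x hx hh => hfd' s x hx hh.2, h⟩
    · exact Or.inl ⟨f s, hfB s, hd, h⟩
  have hsink : ∃ t, ∀ s, T.Adj s t → arrow s t := by
    by_contra hns
    push_neg at hns
    choose g hg hng using hns
    have harr : ∀ t, arrow t (g t) := fun t =>
      (htotal _ _ (hg t)).resolve_left (hng t)
    have hinj : Function.Injective (fun t : Fin m => s(t, g t)) := by
      intro a b hab
      simp only [Sym2.eq_iff] at hab
      rcases hab with ⟨h1, _⟩ | ⟨h1, h2⟩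
      · exact h1
      · exfalso
        have h3 : arrow a b := h2 ▸ harr a
        have h4 : ¬arrow a b := by rw [h1]; exact hng b
        exact h4 h3
    have : Fintype T.edgeSet := Fintype.ofFinite _
    have hcard : m ≤ T.edgeFinset.card := by
      have h5 : (Finset.univ : Finset (Fin m)).card ≤ T.edgeFinset.card :=
        Finset.card_le_card_of_injOn (fun t : Fin m => s(t, g t))
          (fun a _ => by simpa using (hg a).symm) hinj.injOn
      simpa using h5
    have hm : 0 < m := by
      have : Nonempty (Fin m) := ht.isConnected.nonempty
      exact Fin.pos (Classical.arbitrary _)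
    have := ht.card_edgeFinset
    simp only [Fintype.card_fin] at this
    omega
  obtain ⟨t0, hsink⟩ := hsink
  obtain ⟨⟨b, hb⟩⟩ := (hBconn _ (hfB t0)).nonempty
  obtain ⟨r, hr⟩ := htd.2.1 b
  have hrt : r ≠ t0 := fun h => hfd' t0 b hb (h ▸ hr)
  obtain ⟨s, hts, hrs⟩ := exists_branch ht hrt
  have hd : ∀ x ∈ f t0, ¬(x ∈ X s ∧ x ∈ X t0) := fun x hx hh => hfd' t0 x hx hh.2
  have hB0 : f t0 ⊆ Wside T X s t0 := by
    rcases connected_side htd hts.symm (hBconn _ (hfB t0)) hd with h | h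
    · exact h
    · exfalso
      have hbW : b ∈ Wside T X s t0 := mem_Wside.2 ⟨r, hrs, hr⟩
      exact hfd' t0 b hb (Wside_inter htd hts.symm hbW (h hb)).2
  obtain ⟨B1, hB1, hB1d, hB1W⟩ := hsink s hts.symm
  rcases htouch _ (hfB t0) _ hB1 with ⟨x, hx0, hx1⟩ | ⟨u, hu, v, hv, huv⟩
  · exact hB1d x hx1 (Wside_inter htd hts.symm (hB0 hx0) (hB1W hx1))
  · obtain ⟨r', hur, hvr⟩ := htd.2.2.1 u v huv
    rcases side_total ht hts.symm r' with h | h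
    · have : v ∈ Wside T X s t0 := mem_Wside.2 ⟨r', h, hvr⟩
      exact hB1d v hv (Wside_inter htd hts.symm this (hB1W hv))
    · have : u ∈ Wside T X t0 s := mem_Wside.2 ⟨r', h, hur⟩
      exact hfd' t0 u hu (Wside_inter htd hts.symm (hB0 hu) this).2

end TD

section GRID

lemma abs_int_one {a b : ℕ} (h : a + 1 = b) : |(a:ℤ) - (b:ℤ)| = 1 := by
  have h2 : (a:ℤ) - b = -1 := by omega
  rw [h2]; norm_num

variable {k : ℕ}

lemma grid_adj_h {i c d : Fin k} (h : c.val + 1 = d.val) :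
    (gridGraph k).Adj (i, c) (i, d) := Or.inl ⟨rfl, abs_int_one h⟩

lemma grid_adj_v {j a b : Fin k} (h : a.val + 1 = b.val) :
    (gridGraph k).Adj (a, j) (b, j) := Or.inr ⟨rfl, abs_int_one h⟩

/-- `⟨n % k, _⟩ : Fin k`. -/
def finOf (hk0 : 0 < k) (n : ℕ) : Fin k := ⟨n % k, Nat.mod_lt n hk0⟩

lemma finOf_val {hk0 : 0 < k} {n : ℕ} (h : n < k) : (finOf hk0 n).val = n :=
  Nat.mod_eq_of_lt h

lemma finOf_val_eq (hk0 : 0 < k) (c : Fin k) : finOf hk0 c.val = c :=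
  Fin.ext (Nat.mod_eq_of_lt c.isLt)

lemma rowReach (hk0 : 0 < k) {C : Set (Fin k × Fin k)} (i c d : Fin k)
    (hcd : c.val ≤ d.val)
    (hmem : ∀ n (hn : n < k), c.val ≤ n → n ≤ d.val → (i, (⟨n, hn⟩ : Fin k)) ∈ C)
    (hc : (i, c) ∈ C) (hd : (i, d) ∈ C) :
    ((gridGraph k).induce C).Reachable ⟨(i, c), hc⟩ ⟨(i, d), hd⟩ := by
  have hmem' : ∀ n, c.val ≤ n → n ≤ d.val → (i, finOf hk0 n) ∈ C := by
    intro n h1 h2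
    have hn : n < k := lt_of_le_of_lt h2 d.isLt
    have : finOf hk0 n = ⟨n, hn⟩ := Fin.ext (finOf_val hn)
    rw [this]; exact hmem n hn h1 h2
  have := reach_chain (G := gridGraph k) (C := C) (fun n => (i, finOf hk0 n))
    c.val d.val hcd hmem' ?_
  · have e1 : (⟨(i, finOf hk0 c.val), hmem' c.val le_rfl hcd⟩ : C) = ⟨(i, c), hc⟩ := by
      apply Subtype.ext; simp [finOf_val_eq]
    have e2 : (⟨(i, finOf hk0 d.val), hmem' d.val hcd le_rfl⟩ : C) = ⟨(i, d), hd⟩ := by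
      apply Subtype.ext; simp [finOf_val_eq]
    rwa [e1, e2] at this
  · intro n h1 h2
    apply grid_adj_h
    rw [finOf_val (by omega), finOf_val (by omega)]

lemma colReach (hk0 : 0 < k) {C : Set (Fin k × Fin k)} (j c d : Fin k)
    (hcd : c.val ≤ d.val)
    (hmem : ∀ n (hn : n < k), c.val ≤ n → n ≤ d.val → ((⟨n, hn⟩ : Fin k), j) ∈ C)
    (hc : (c, j) ∈ C) (hd : (d, j) ∈ C) :
    ((gridGraph k).induce C).Reachable ⟨(c, j), hc⟩ ⟨(d, j), hd⟩ := by
  have hmem' : ∀ n, c.val ≤ n → n ≤ d.val → (finOf hk0 n, j) ∈ C := by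
    intro n h1 h2
    have hn : n < k := lt_of_le_of_lt h2 d.isLt
    have : finOf hk0 n = ⟨n, hn⟩ := Fin.ext (finOf_val hn)
    rw [this]; exact hmem n hn h1 h2
  have := reach_chain (G := gridGraph k) (C := C) (fun n => (finOf hk0 n, j))
    c.val d.val hcd hmem' ?_
  · have e1 : (⟨(finOf hk0 c.val, j), hmem' c.val le_rfl hcd⟩ : C) = ⟨(c, j), hc⟩ := by
      apply Subtype.ext; simp [finOf_val_eq]
    have e2 : (⟨(finOf hk0 d.val, j), hmem' d.val hcd le_rfl⟩ : C) = ⟨(d, j), hd⟩ := by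
      apply Subtype.ext; simp [finOf_val_eq]
    rwa [e1, e2] at this
  · intro n h1 h2
    apply grid_adj_v
    rw [finOf_val (by omega), finOf_val (by omega)]

def crossSet (k : ℕ) (i j : Fin k) : Set (Fin k × Fin k) :=
  {p | (p.1 = i ∧ p.2.val < k - 1) ∨ (p.2 = j ∧ p.1.val < k - 1)}

def lastRow (k : ℕ) : Set (Fin k × Fin k) := {p | p.1.val = k - 1}

def lastCol (k : ℕ) : Set (Fin k × Fin k) := {p | p.2.val = k - 1 ∧ p.1.val < k - 1}

def gridBramble (k : ℕ) : Set (Set (Fin k × Fin k)) :=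
  {B | ∃ i j : Fin k, i.val < k - 1 ∧ j.val < k - 1 ∧ B = crossSet k i j}
    ∪ {lastRow k, lastCol k}

lemma mem_gridBramble {B : Set (Fin k × Fin k)} :
    B ∈ gridBramble k ↔
      (∃ i j : Fin k, i.val < k - 1 ∧ j.val < k - 1 ∧ B = crossSet k i j) ∨
        B = lastRow k ∨ B = lastCol k := by
  simp only [gridBramble, Set.mem_union, Set.mem_insert_iff, Set.mem_singleton_iff,
    Set.mem_setOf_eq]
  all_goals tauto

lemma crossSet_connected (hk2 : 2 ≤ k) {i j : Fin k} (hi : i.val < k - 1)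
    (hj : j.val < k - 1) : ((gridGraph k).induce (crossSet k i j)).Connected := by
  have hk0 : 0 < k := by omega
  have hhub : (i, j) ∈ crossSet k i j := Or.inl ⟨rfl, hj⟩
  apply connected_of_hub (i, j) hhub
  rintro ⟨x1, x2⟩ hx
  rcases hx with ⟨hx1, h2⟩ | ⟨hx2, h2⟩
  · subst hx1
    have h2' : x2.val < k - 1 := h2
    rcases le_total x2.val j.val with hle | hle
    · exact rowReach hk0 x1 x2 j hle
        (fun n hn h1 h2' => Or.inl ⟨rfl, by simp; omega⟩) (Or.inl ⟨rfl, h2⟩) hhub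
    · exact (rowReach hk0 x1 j x2 hle
        (fun n hn h1 h2' => Or.inl ⟨rfl, by simp; omega⟩) hhub (Or.inl ⟨rfl, h2⟩)).symm
  · subst hx2
    have h2' : x1.val < k - 1 := h2
    rcases le_total x1.val i.val with hle | hle
    · exact colReach hk0 x2 x1 i hle
        (fun n hn h1 h2' => Or.inr ⟨rfl, by simp; omega⟩) (Or.inr ⟨rfl, h2⟩) hhub
    · exact (colReach hk0 x2 i x1 hle
        (fun n hn h1 h2' => Or.inr ⟨rfl, by simp; omega⟩) hhub (Or.inr ⟨rfl, h2⟩)).symm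

lemma mem_lastRow {p : Fin k × Fin k} : p ∈ lastRow k ↔ p.1.val = k - 1 := Iff.rfl

lemma mem_lastCol {p : Fin k × Fin k} :
    p ∈ lastCol k ↔ p.2.val = k - 1 ∧ p.1.val < k - 1 := Iff.rfl

lemma lastRow_connected (hk2 : 2 ≤ k) : ((gridGraph k).induce (lastRow k)).Connected := by
  have hk0 : 0 < k := by omega
  have hhub : ((⟨k-1, by omega⟩ : Fin k), (⟨0, hk0⟩ : Fin k)) ∈ lastRow k :=
    mem_lastRow.2 rfl
  apply connected_of_hub _ hhub
  rintro ⟨x1, x2⟩ hx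
  obtain ⟨v, hvlt⟩ := x1
  have hv : v = k - 1 := mem_lastRow.1 hx
  subst hv
  exact (rowReach hk0 _ ⟨0, hk0⟩ x2 (Nat.zero_le _)
    (fun n hn h1 h2 => mem_lastRow.2 rfl) hhub hx).symm

lemma lastCol_connected (hk2 : 2 ≤ k) : ((gridGraph k).induce (lastCol k)).Connected := by
  have hk0 : 0 < k := by omega
  have hhub : ((⟨0, hk0⟩ : Fin k), (⟨k-1, by omega⟩ : Fin k)) ∈ lastCol k := ⟨rfl, by
    simpa using (by omega : 0 < k - 1)⟩
  apply connected_of_hub _ hhub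
  rintro ⟨x1, x2⟩ hx
  obtain ⟨v, hvlt⟩ := x2
  obtain ⟨hval, hlt⟩ := hx
  have hv : v = k - 1 := hval
  subst hv
  have hlt' : x1.val < k - 1 := hlt
  exact (colReach hk0 _ ⟨0, hk0⟩ x1 (Nat.zero_le _)
    (fun n hn h1 h2 => mem_lastCol.2 ⟨rfl, by simpa using (by omega : n < k - 1)⟩) hhub
    (mem_lastCol.2 ⟨hval, hlt⟩)).symm

lemma gridBramble_connected (hk2 : 2 ≤ k) :
    ∀ B ∈ gridBramble k, ((gridGraph k).induce B).Connected := by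
  intro B hB
  rcases mem_gridBramble.1 hB with ⟨i, j, hi, hj, rfl⟩ | rfl | rfl
  · exact crossSet_connected hk2 hi hj
  · exact lastRow_connected hk2
  · exact lastCol_connected hk2

lemma gridBramble_touch (hk2 : 2 ≤ k) :
    ∀ B ∈ gridBramble k, ∀ B' ∈ gridBramble k,
      (B ∩ B').Nonempty ∨ ∃ u ∈ B, ∃ v ∈ B', (gridGraph k).Adj u v := by
  have hk0 : 0 < k := by omega
  have hk1 : k - 2 < k := by omega
  have hk1' : k - 1 < k := by omega
  have hsucc : (k - 2) + 1 = k - 1 := by omega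
  intro B hB B' hB'
  rcases mem_gridBramble.1 hB with ⟨i, j, hi, hj, rfl⟩ | rfl | rfl <;>
    rcases mem_gridBramble.1 hB' with ⟨i', j', hi', hj', rfl⟩ | rfl | rfl
  · exact Or.inl ⟨(i, j'), Or.inl ⟨rfl, hj'⟩, Or.inr ⟨rfl, hi⟩⟩
  · refine Or.inr ⟨(⟨k-2, hk1⟩, j), Or.inr ⟨rfl, by simpa using (by omega : k - 2 < k - 1)⟩,
      (⟨k-1, hk1'⟩, j), rfl, grid_adj_v (by simpa using hsucc)⟩
  · exact Or.inr ⟨(i, ⟨k-2, hk1⟩), Or.inl ⟨rfl, by simpa using (by omega : k - 2 < k - 1)⟩,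
      (i, ⟨k-1, hk1'⟩), ⟨rfl, hi⟩, grid_adj_h (by simpa using hsucc)⟩
  · exact Or.inr ⟨(⟨k-1, hk1'⟩, j'), rfl, (⟨k-2, hk1⟩, j'),
      Or.inr ⟨rfl, by simpa using (by omega : k - 2 < k - 1)⟩,
      (grid_adj_v (by simpa using hsucc)).symm⟩
  · exact Or.inl ⟨(⟨k-1, hk1'⟩, ⟨0, hk0⟩), rfl, rfl⟩
  · exact Or.inr ⟨(⟨k-1, hk1'⟩, ⟨k-1, hk1'⟩), rfl,
      (⟨k-2, hk1⟩, ⟨k-1, hk1'⟩), ⟨rfl, by simpa using (by omega : k - 2 < k - 1)⟩,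
      (grid_adj_v (by simpa using hsucc)).symm⟩
  · exact Or.inr ⟨(i', ⟨k-1, hk1'⟩), ⟨rfl, hi'⟩, (i', ⟨k-2, hk1⟩),
      Or.inl ⟨rfl, by simpa using (by omega : k - 2 < k - 1)⟩,
      (grid_adj_h (by simpa using hsucc)).symm⟩
  · exact Or.inr ⟨(⟨k-2, hk1⟩, ⟨k-1, hk1'⟩), ⟨rfl, by simpa using (by omega : k - 2 < k - 1)⟩,
      (⟨k-1, hk1'⟩, ⟨k-1, hk1'⟩), rfl, grid_adj_v (by simpa using hsucc)⟩
  · exact Or.inl ⟨(⟨0, hk0⟩, ⟨k-1, hk1'⟩), ⟨rfl, by simpa using (by omega : 0 < k - 1)⟩,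
      ⟨rfl, by simpa using (by omega : 0 < k - 1)⟩⟩

end GRID

section COUNT

lemma le_ncard_of_inj {α : Type*} {S : Set α} (hS : S.Finite) {n : ℕ} (h : Fin n → α)
    (hmem : ∀ j, h j ∈ S) (hinj : Function.Injective h) : n ≤ S.ncard := by
  have h1 : (Set.range h).ncard = n := by
    rw [← Set.image_univ, Set.ncard_image_of_injective _ hinj, Set.ncard_univ,
      Nat.card_eq_fintype_card, Fintype.card_fin]
  rw [← h1]
  exact Set.ncard_le_ncard (Set.range_subset_iff.2 hmem) hS

variable {k : ℕ}

lemma grid_hit_aux (hk2 : 2 ≤ k) {S : Set (Fin k × Fin k)} {a b : Fin k × Fin k}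
    (haS : a ∈ S) (hbS : b ∈ S) (ha1 : a.1.val = k - 1) (hb2 : b.2.val = k - 1)
    (hab : a ≠ b)
    (hrows : ∀ i : Fin k, i.val < k - 1 → ∃ p, p ∈ S ∧ p.1 = i ∧ p.2.val < k - 1) :
    k + 1 ≤ S.ncard := by
  have hS : S.Finite := Set.toFinite S
  choose q hqS hq1 hq2 using hrows
  set h : Fin (k+1) → Fin k × Fin k := fun j =>
    if hj : j.val < k - 1 then q ⟨j.val, by omega⟩ hj
    else if j.val = k - 1 then a else b with hdef
  have key1 : ∀ w : Fin (k+1), ∀ hw : w.val < k - 1,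
      (h w).1.val = w.val ∧ (h w).2.val < k - 1 ∧ h w ∈ S := by
    intro w hw
    have e : h w = q ⟨w.val, by omega⟩ hw := by rw [hdef]; exact dif_pos hw
    refine ⟨?_, by rw [e]; exact hq2 _ _, by rw [e]; exact hqS _ _⟩
    rw [e, hq1 _ hw]
  have key2 : ∀ w : Fin (k+1), w.val = k - 1 → h w = a := by
    intro w hw
    rw [hdef]
    simp only
    rw [dif_neg (by omega), if_pos hw]
  have key3 : ∀ w : Fin (k+1), w.val = k → h w = b := by
    intro w hw
    rw [hdef]
    simp only
    rw [dif_neg (by omega), if_neg (by omega)]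
  have hmem : ∀ w, h w ∈ S := by
    intro w
    by_cases hw : w.val < k - 1
    · exact (key1 w hw).2.2
    · rcases (by omega : w.val = k - 1 ∨ w.val = k) with hw' | hw'
      · rw [key2 w hw']; exact haS
      · rw [key3 w hw']; exact hbS
  have hinj : Function.Injective h := by
    intro u v huv
    apply Fin.ext
    by_cases hu : u.val < k - 1 <;> by_cases hv : v.val < k - 1
    · have e1 := (key1 u hu).1
      have e2 := (key1 v hv).1
      rw [huv] at e1; omega
    · exfalso
      rcases (by omega : v.val = k - 1 ∨ v.val = k) with hv' | hv'
      · have := key2 v hv'; rw [this] at huv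
        have := (key1 u hu).1; rw [huv] at this; omega
      · have := key3 v hv'; rw [this] at huv
        have := (key1 u hu).2.1; rw [huv] at this; omega
    · exfalso
      rcases (by omega : u.val = k - 1 ∨ u.val = k) with hu' | hu'
      · have := key2 u hu'; rw [this] at huv
        have := (key1 v hv).1; rw [← huv] at this; omega
      · have := key3 u hu'; rw [this] at huv
        have := (key1 v hv).2.1; rw [← huv] at this; omega
    · rcases (by omega : u.val = k - 1 ∨ u.val = k) with hu' | hu' <;>
        rcases (by omega : v.val = k - 1 ∨ v.val = k) with hv' | hv'
      · omega
      · exfalso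
        rw [key2 u hu', key3 v hv'] at huv
        exact hab huv
      · exfalso
        rw [key3 u hu', key2 v hv'] at huv
        exact hab huv.symm
      · omega
  exact le_ncard_of_inj hS h hmem hinj

lemma grid_hit_bound (hk2 : 2 ≤ k) {S : Set (Fin k × Fin k)}
    (hS : ∀ B ∈ gridBramble k, (B ∩ S).Nonempty) : k + 1 ≤ S.ncard := by
  obtain ⟨a, haR, haS⟩ := hS (lastRow k) (mem_gridBramble.2 (Or.inr (Or.inl rfl)))
  obtain ⟨b, hbC, hbS⟩ := hS (lastCol k) (mem_gridBramble.2 (Or.inr (Or.inr rfl)))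
  have ha1 : a.1.val = k - 1 := haR
  have hb2 : b.2.val = k - 1 := hbC.1
  have hb1 : b.1.val < k - 1 := hbC.2
  have hab : a ≠ b := by
    intro h; rw [h] at ha1; omega
  have hcases : (∀ i : Fin k, i.val < k - 1 → ∃ p, p ∈ S ∧ p.1 = i ∧ p.2.val < k - 1) ∨
      (∀ j : Fin k, j.val < k - 1 → ∃ p, p ∈ S ∧ p.2 = j ∧ p.1.val < k - 1) := by
    by_contra hc
    push_neg at hc
    obtain ⟨⟨i, hi, hrow⟩, ⟨j, hj, hcol⟩⟩ := hc
    obtain ⟨p, hpB, hpS⟩ := hS (crossSet k i j) (mem_gridBramble.2 (Or.inl ⟨i, j, hi, hj, rfl⟩))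
    rcases hpB with ⟨h1, h2⟩ | ⟨h1, h2⟩
    · have := hrow p hpS h1
      have h2' : p.2.val < k - 1 := h2
      omega
    · have := hcol p hpS h1
      have h2' : p.1.val < k - 1 := h2
      omega
  rcases hcases with hrows | hcols
  · exact grid_hit_aux hk2 haS hbS ha1 hb2 hab hrows
  · -- transpose
    have hmain : k + 1 ≤ (Prod.swap ⁻¹' S : Set (Fin k × Fin k)).ncard := by
      refine grid_hit_aux hk2 (a := b.swap) (b := a.swap) ?_ ?_ ?_ ?_ ?_ ?_
      · simpa using hbS
      · simpa using haS
      · exact hb2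
      · exact ha1
      · intro h
        exact hab (Prod.swap_injective (by rw [h]) ).symm
      · intro i hi
        obtain ⟨p, hp, hp2, hp1⟩ := hcols i hi
        exact ⟨p.swap, by simpa using hp, hp2, hp1⟩
    rwa [← Set.image_swap_eq_preimage_swap,
      Set.ncard_image_of_injective _ Prod.swap_injective] at hmain

end COUNT

section UPPER

open SimpleGraph

lemma pathGraph_isBridge_aux {N : ℕ} (v w : Fin N) (hvw : v.val + 1 = w.val) :
    (pathGraph N).IsBridge s(v, w) := by
  have hadj : (pathGraph N).Adj v w := pathGraph_adj.2 (Or.inl hvw)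
  rw [SimpleGraph.isBridge_iff]
  rintro ⟨p⟩
  have hP := walk_ind (G := pathGraph N \ fromEdgeSet {s(v, w)})
    (fun x => x.val ≤ v.val) ?_ p le_rfl
  · omega
  · intro a b hab ha
    obtain ⟨hab1, hab2⟩ := hab
    have hne : s(a, b) ≠ s(v, w) := by
      intro he
      exact hab2 (by simp [he, hab1.ne])
    rcases pathGraph_adj.1 hab1 with h | h
    · by_cases hav : a.val = v.val
      · exfalso
        apply hne
        have ha' : a = v := Fin.ext hav
        have hb' : b = w := Fin.ext (by omega)
        rw [ha', hb']
      · omega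
    · omega

lemma pathGraph_isTree {N : ℕ} (hN : 0 < N) : (pathGraph N).IsTree := by
  constructor
  · obtain ⟨N', rfl⟩ : ∃ N', N = N' + 1 := ⟨N - 1, by omega⟩
    exact pathGraph_connected N'
  · rw [isAcyclic_iff_forall_adj_isBridge]
    intro v w hadj
    rcases pathGraph_adj.1 hadj with h | h
    · exact pathGraph_isBridge_aux v w h
    · rw [Sym2.eq_swap]
      exact pathGraph_isBridge_aux w v h

lemma pathInterval_reach {N : ℕ} (hN : 0 < N) {C : Set (Fin N)} (c d : Fin N)
    (hcd : c.val ≤ d.val)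
    (hmem : ∀ n (hn : n < N), c.val ≤ n → n ≤ d.val → (⟨n, hn⟩ : Fin N) ∈ C)
    (hc : c ∈ C) (hd : d ∈ C) :
    ((pathGraph N).induce C).Reachable ⟨c, hc⟩ ⟨d, hd⟩ := by
  have hmem' : ∀ n, c.val ≤ n → n ≤ d.val → finOf hN n ∈ C := by
    intro n h1 h2
    have hn : n < N := lt_of_le_of_lt h2 d.isLt
    have : finOf hN n = ⟨n, hn⟩ := Fin.ext (finOf_val hn)
    rw [this]; exact hmem n hn h1 h2
  have := reach_chain (G := pathGraph N) (C := C) (fun n => finOf hN n)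
    c.val d.val hcd hmem' ?_
  · have e1 : (⟨finOf hN c.val, hmem' c.val le_rfl hcd⟩ : C) = ⟨c, hc⟩ := by
      apply Subtype.ext; simp [finOf_val_eq]
    have e2 : (⟨finOf hN d.val, hmem' d.val hcd le_rfl⟩ : C) = ⟨d, hd⟩ := by
      apply Subtype.ext; simp [finOf_val_eq]
    rwa [e1, e2] at this
  · intro n h1 h2
    refine pathGraph_adj.2 (Or.inl ?_)
    rw [finOf_val (by omega), finOf_val (by omega)]

variable {k : ℕ}

/-- row-major linearization of the grid. -/
def lin (v : Fin k × Fin k) : ℕ := v.1.val * k + v.2.val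

lemma lin_lt (v : Fin k × Fin k) : lin v < k * k := by
  have h1 : v.1.val + 1 ≤ k := v.1.isLt
  have h2 : v.2.val < k := v.2.isLt
  calc v.1.val * k + v.2.val < v.1.val * k + k := by omega
    _ = (v.1.val + 1) * k := by ring
    _ ≤ k * k := Nat.mul_le_mul_right k h1

lemma lin_inj {u v : Fin k × Fin k} (h : lin u = lin v) : u = v := by
  have h2u : u.2.val < k := u.2.isLt
  have h2v : v.2.val < k := v.2.isLt
  have key : ∀ a b : Fin k × Fin k, lin a = lin b → a.1.val < b.1.val → False := by
    intro a b hab hlt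
    have h3 : (a.1.val + 1) * k ≤ b.1.val * k := Nat.mul_le_mul_right k hlt
    have h4 : (a.1.val + 1) * k = a.1.val * k + k := by ring
    have h5 : b.2.val < k := b.2.isLt
    have h6 : a.2.val < k := a.2.isLt
    unfold lin at hab
    omega
  have h1 : u.1.val = v.1.val := by
    rcases lt_trichotomy u.1.val v.1.val with hlt | he | hgt
    · exact absurd (key u v h hlt) (by simp)
    · exact he
    · exact absurd (key v u h.symm hgt) (by simp)
  have h2 : u.2.val = v.2.val := by unfold lin at h; rw [h1] at h; omega
  exact Prod.ext (Fin.ext h1) (Fin.ext h2)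

/-- the bags of the sweep path-decomposition. -/
def gridBag (k : ℕ) (p : Fin (k * k)) : Set (Fin k × Fin k) :=
  {v | p.val ≤ lin v ∧ lin v ≤ p.val + k}

lemma grid_upper (hk : 1 ≤ k) :
    ∃ (m : ℕ) (T : SimpleGraph (Fin m)) (X : Fin m → Set (Fin k × Fin k)),
      IsTreeDecomp (gridGraph k) T X ∧ ∀ i, (X i).ncard ≤ k + 1 := by
  have hkk : 0 < k * k := by positivity
  refine ⟨k * k, pathGraph (k * k), gridBag k, ⟨pathGraph_isTree hkk, ?_, ?_, ?_⟩, ?_⟩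
  · intro v
    refine ⟨⟨lin v, lin_lt v⟩, ?_⟩
    show lin v ≤ lin v ∧ lin v ≤ lin v + k
    omega
  · -- edges
    intro u v huv
    rcases huv with ⟨h1, h2⟩ | ⟨h1, h2⟩
    · -- horizontal: same row
      have h2' : u.2.val + 1 = v.2.val ∨ v.2.val + 1 = u.2.val := by
        rcases (abs_eq (by norm_num : (0:ℤ) ≤ 1)).1 h2 with h | h
        · right; omega
        · left; omega
      have hlin : lin v = lin u + 1 ∨ lin u = lin v + 1 := by
        unfold lin; rw [h1]
        rcases h2' with h | h
        · left; omega
        · right; omega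
      rcases hlin with h | h
      · refine ⟨⟨lin u, lin_lt u⟩, ?_, ?_⟩
        · show lin u ≤ lin u ∧ lin u ≤ lin u + k
          omega
        · show lin u ≤ lin v ∧ lin v ≤ lin u + k
          omega
      · refine ⟨⟨lin v, lin_lt v⟩, ?_, ?_⟩
        · show lin v ≤ lin u ∧ lin u ≤ lin v + k
          omega
        · show lin v ≤ lin v ∧ lin v ≤ lin v + k
          omega
    · -- vertical: same column
      have h2' : u.1.val + 1 = v.1.val ∨ v.1.val + 1 = u.1.val := by
        rcases (abs_eq (by norm_num : (0:ℤ) ≤ 1)).1 h2 with h | h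
        · right; omega
        · left; omega
      have hlin : lin v = lin u + k ∨ lin u = lin v + k := by
        unfold lin; rw [h1]
        rcases h2' with h | h
        · left
          have : v.1.val * k = u.1.val * k + k := by rw [← h]; ring
          omega
        · right
          have : u.1.val * k = v.1.val * k + k := by rw [← h]; ring
          omega
      rcases hlin with h | h
      · refine ⟨⟨lin u, lin_lt u⟩, ?_, ?_⟩
        · show lin u ≤ lin u ∧ lin u ≤ lin u + k
          omega
        · show lin u ≤ lin v ∧ lin v ≤ lin u + k
          omega
      · refine ⟨⟨lin v, lin_lt v⟩, ?_, ?_⟩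
        · show lin v ≤ lin u ∧ lin u ≤ lin v + k
          omega
        · show lin v ≤ lin v ∧ lin v ≤ lin v + k
          omega
  · -- bag-connectivity
    intro v
    have hhub : (⟨lin v, lin_lt v⟩ : Fin (k * k)) ∈ {i | v ∈ gridBag k i} := by
      show lin v ≤ lin v ∧ lin v ≤ lin v + k
      omega
    apply connected_of_hub _ hhub
    intro p hp
    obtain ⟨hp1, hp2⟩ := hp
    refine pathInterval_reach (C := {i | v ∈ gridBag k i}) hkk p ⟨lin v, lin_lt v⟩ hp1
      (fun n hn h1 h2 => ?_) ⟨hp1, hp2⟩ hhub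
    show n ≤ lin v ∧ lin v ≤ n + k
    have h2' : n ≤ lin v := h2
    constructor
    · exact h2'
    · omega
  · -- bag sizes
    intro p
    set f : Fin k × Fin k → Fin (k + 1) :=
      fun v => ⟨min (lin v - p.val) k, by omega⟩ with hfdef
    have hinj : Set.InjOn f (gridBag k p) := by
      intro u hu v hv he
      obtain ⟨hu1, hu2⟩ := hu
      obtain ⟨hv1, hv2⟩ := hv
      apply lin_inj
      have he' : min (lin u - p.val) k = min (lin v - p.val) k := congrArg Fin.val he
      omega
    have hle := Set.ncard_le_ncard_of_injOn f
      (fun a (_ : a ∈ gridBag k p) => Set.mem_univ (f a)) hinj Set.finite_univ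
    calc (gridBag k p).ncard ≤ (Set.univ : Set (Fin (k+1))).ncard := hle
      _ = k + 1 := by rw [Set.ncard_univ, Nat.card_eq_fintype_card, Fintype.card_fin]

end UPPER


lemma grid_lower {k : ℕ} (hk2 : 2 ≤ k) {w : ℕ}
    (hw : ∃ (m : ℕ) (T : SimpleGraph (Fin m)) (X : Fin m → Set (Fin k × Fin k)),
      IsTreeDecomp (gridGraph k) T X ∧ ∀ i, (X i).ncard ≤ w + 1) : k ≤ w := by
  obtain ⟨m, T, X, htd, hsize⟩ := hw
  obtain ⟨i, hi⟩ := exists_bag_covering htd (gridBramble k)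
    (gridBramble_connected hk2) (gridBramble_touch hk2)
  have h1 := grid_hit_bound hk2 (S := X i) hi
  have h2 := hsize i
  omega

end TWAux

theorem grid_treewidth (k : ℕ) (hk : 1 ≤ k) :
    k - 1 ≤ treewidth (gridGraph k) ∧ (2 ≤ k → treewidth (gridGraph k) = k) := by
  have hmem : k ∈ {w | ∃ (m : ℕ) (T : SimpleGraph (Fin m))
      (X : Fin m → Set (Fin k × Fin k)),
      IsTreeDecomp (gridGraph k) T X ∧ ∀ i, (X i).ncard ≤ w + 1} :=
    TWAux.grid_upper hk
  constructor
  · by_cases h2 : 2 ≤ k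
    · have hlow : k ≤ treewidth (gridGraph k) :=
        le_csInf ⟨k, hmem⟩ (fun w hw => TWAux.grid_lower h2 hw)
      omega
    · have hk1 : k = 1 := by omega
      subst hk1
      simp
  · intro h2
    exact le_antisymm (Nat.sInf_le hmem)
      (le_csInf ⟨k, hmem⟩ (fun w hw => TWAux.grid_lower h2 hw))
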